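/- Let f be a real-valued function defined on triples (z₁,z₂,z₃) of pairwise distinct points of ℂ, and suppose that for every Möbius transformation φ(w) = (αw+β)/(γw+δ) with αδ−βγ ≠ 0 that is nonconstant and satisfies φ(zⱼ) ≠ ∞ for j = 1,2,3, one has f(φ(z₁),φ(z₂),φ(z₃)) = f(z₁,z₂,z₃) · |φ′(z₁)|^{−5/4} |φ′(z₂)|^{−5/48} |φ′(z₃)|^{−5/48}, where φ′(w) = (αδ−βγ)/(γw+δ)². Then there exists a constant C ∈ ℝ such that f(z₁,z₂,z₃) = C · F(z₁,z₂,z₃) for all pairwise distinct z₁,z₂,z₃ ∈ ℂ; if moreover f is everywhere strictly positive, then C > 0. -/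

import Mathlib

open Filter

noncomputable section

namespace PercLog

/-- The function `F(z₁,z₂,z₃) = |z₁-z₂|^{-5/4} |z₁-z₃|^{-5/4} |z₃-z₂|^{25/24}`. -/
def Ffun (z₁ z₂ z₃ : ℂ) : ℝ :=
  ‖z₁ - z₂‖ ^ (-(5/4 : ℝ)) * ‖z₁ - z₃‖ ^ (-(5/4 : ℝ)) *
    ‖z₃ - z₂‖ ^ ((25 : ℝ)/24)

/-- The Möbius transformation `w ↦ (αw+β)/(γw+δ)`. -/
def moebius (α β γ δ : ℂ) (w : ℂ) : ℂ := (α * w + β) / (γ * w + δ)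

/-- The derivative of the Möbius transformation, `(αδ-βγ)/(γw+δ)²`. -/
def moebiusDeriv (α β γ δ : ℂ) (w : ℂ) : ℂ := (α * δ - β * γ) / (γ * w + δ) ^ 2

lemma rpow_key {A B C d x y z : ℝ} (hA : 0 < A) (hB : 0 < B) (hC : 0 < C)
    (hd : 0 < d) (hx : 0 < x) (hy : 0 < y) (hz : 0 < z) :
    (d * x / (A * B)) ^ (-(5/4 : ℝ)) * (d * y / (A * C)) ^ (-(5/4 : ℝ)) *
      (d * z / (C * B)) ^ ((25 : ℝ)/24)
    = x ^ (-(5/4 : ℝ)) * y ^ (-(5/4 : ℝ)) * z ^ ((25 : ℝ)/24) *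
      (d / A ^ 2) ^ (-(5/4 : ℝ)) * (d / B ^ 2) ^ (-(5/48 : ℝ)) *
      (d / C ^ 2) ^ (-(5/48 : ℝ)) := by
  have h1 : 0 < d * x / (A * B) := by positivity
  have h2 : 0 < d * y / (A * C) := by positivity
  have h3 : 0 < d * z / (C * B) := by positivity
  have h4 : 0 < d / A ^ 2 := by positivity
  have h5 : 0 < d / B ^ 2 := by positivity
  have h6 : 0 < d / C ^ 2 := by positivity
  rw [Real.rpow_def_of_pos h1, Real.rpow_def_of_pos h2, Real.rpow_def_of_pos h3,
    Real.rpow_def_of_pos h4, Real.rpow_def_of_pos h5, Real.rpow_def_of_pos h6,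
    Real.rpow_def_of_pos hx, Real.rpow_def_of_pos hy, Real.rpow_def_of_pos hz,
    ← Real.exp_add, ← Real.exp_add, ← Real.exp_add, ← Real.exp_add, ← Real.exp_add,
    ← Real.exp_add, ← Real.exp_add]
  congr 1
  rw [Real.log_div (by positivity) (by positivity), Real.log_div (by positivity) (by positivity),
    Real.log_div (by positivity) (by positivity), Real.log_div (by positivity) (by positivity),
    Real.log_div (by positivity) (by positivity), Real.log_div (by positivity) (by positivity),
    Real.log_mul hd.ne' hx.ne', Real.log_mul hd.ne' hy.ne', Real.log_mul hd.ne' hz.ne',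
    Real.log_mul hA.ne' hB.ne', Real.log_mul hA.ne' hC.ne', Real.log_mul hC.ne' hB.ne',
    Real.log_pow, Real.log_pow, Real.log_pow]
  push_cast
  ring

lemma moebius_sub (α β γ δ : ℂ) (a b : ℂ) (ha : γ * a + δ ≠ 0) (hb : γ * b + δ ≠ 0) :
    moebius α β γ δ a - moebius α β γ δ b =
      (α * δ - β * γ) * (a - b) / ((γ * a + δ) * (γ * b + δ)) := by
  unfold moebius
  rw [div_sub_div _ _ ha hb]
  ring

lemma abs_moebiusDeriv (α β γ δ : ℂ) (w : ℂ) :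
    ‖moebiusDeriv α β γ δ w‖ =
      ‖α * δ - β * γ‖ / ‖γ * w + δ‖ ^ 2 := by
  unfold moebiusDeriv
  rw [norm_div, norm_pow]

lemma Ffun_cov (α β γ δ : ℂ) (hdet : α * δ - β * γ ≠ 0) (z₁ z₂ z₃ : ℂ)
    (h12 : z₁ ≠ z₂) (h13 : z₁ ≠ z₃) (h23 : z₂ ≠ z₃)
    (d1 : γ * z₁ + δ ≠ 0) (d2 : γ * z₂ + δ ≠ 0) (d3 : γ * z₃ + δ ≠ 0) :
    Ffun (moebius α β γ δ z₁) (moebius α β γ δ z₂) (moebius α β γ δ z₃) =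
      Ffun z₁ z₂ z₃ * ‖moebiusDeriv α β γ δ z₁‖ ^ (-(5/4 : ℝ)) *
        ‖moebiusDeriv α β γ δ z₂‖ ^ (-(5/48 : ℝ)) *
        ‖moebiusDeriv α β γ δ z₃‖ ^ (-(5/48 : ℝ)) := by
  unfold Ffun
  rw [moebius_sub α β γ δ z₁ z₂ d1 d2, moebius_sub α β γ δ z₁ z₃ d1 d3,
    moebius_sub α β γ δ z₃ z₂ d3 d2,
    abs_moebiusDeriv, abs_moebiusDeriv, abs_moebiusDeriv,
    norm_div, norm_div, norm_div, norm_mul, norm_mul, norm_mul, norm_mul, norm_mul, norm_mul]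
  have hA : 0 < ‖γ * z₁ + δ‖ := norm_pos_iff.mpr d1
  have hB : 0 < ‖γ * z₂ + δ‖ := norm_pos_iff.mpr d2
  have hC : 0 < ‖γ * z₃ + δ‖ := norm_pos_iff.mpr d3
  have hd : 0 < ‖α * δ - β * γ‖ := norm_pos_iff.mpr hdet
  have hx : 0 < ‖z₁ - z₂‖ := norm_pos_iff.mpr (sub_ne_zero.mpr h12)
  have hy : 0 < ‖z₁ - z₃‖ := norm_pos_iff.mpr (sub_ne_zero.mpr h13)
  have hz : 0 < ‖z₃ - z₂‖ := norm_pos_iff.mpr (sub_ne_zero.mpr h23.symm)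
  exact rpow_key hA hB hC hd hx hy hz

lemma Ffun_pos (z₁ z₂ z₃ : ℂ) (h12 : z₁ ≠ z₂) (h13 : z₁ ≠ z₃) (h23 : z₂ ≠ z₃) :
    0 < Ffun z₁ z₂ z₃ := by
  have hx : 0 < ‖z₁ - z₂‖ := norm_pos_iff.mpr (sub_ne_zero.mpr h12)
  have hy : 0 < ‖z₁ - z₃‖ := norm_pos_iff.mpr (sub_ne_zero.mpr h13)
  have hz : 0 < ‖z₃ - z₂‖ := norm_pos_iff.mpr (sub_ne_zero.mpr h23.symm)
  unfold Ffun
  positivity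

/-- eqns `::OPE2_COV` and `::OPE2_limit_aux1`: a function of
three (pairwise distinct) points that is Möbius covariant with weights
`(5/4, 5/48, 5/48)` is a constant multiple of `F`; if the function is strictly
positive, the constant is strictly positive. -/
theorem covariant_three_point_is_F
    (f : ℂ → ℂ → ℂ → ℝ)
    (hcov : ∀ α β γ δ : ℂ, α * δ - β * γ ≠ 0 →
      ∀ z₁ z₂ z₃ : ℂ, z₁ ≠ z₂ → z₁ ≠ z₃ → z₂ ≠ z₃ →
        γ * z₁ + δ ≠ 0 → γ * z₂ + δ ≠ 0 → γ * z₃ + δ ≠ 0 →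
        f (moebius α β γ δ z₁) (moebius α β γ δ z₂) (moebius α β γ δ z₃) =
          f z₁ z₂ z₃ * ‖moebiusDeriv α β γ δ z₁‖ ^ (-(5/4 : ℝ)) *
            ‖moebiusDeriv α β γ δ z₂‖ ^ (-(5/48 : ℝ)) *
            ‖moebiusDeriv α β γ δ z₃‖ ^ (-(5/48 : ℝ))) :
    ∃ C : ℝ,
      (∀ z₁ z₂ z₃ : ℂ, z₁ ≠ z₂ → z₁ ≠ z₃ → z₂ ≠ z₃ → f z₁ z₂ z₃ = C * Ffun z₁ z₂ z₃) ∧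
      ((∀ z₁ z₂ z₃ : ℂ, z₁ ≠ z₂ → z₁ ≠ z₃ → z₂ ≠ z₃ → 0 < f z₁ z₂ z₃) → 0 < C) := by
  have h01 : (0 : ℂ) ≠ 1 := by norm_num
  have h02 : (0 : ℂ) ≠ 2 := by norm_num
  have h12' : (1 : ℂ) ≠ 2 := by norm_num
  have hF0 : 0 < Ffun 0 1 2 := Ffun_pos 0 1 2 h01 h02 h12'
  refine ⟨f 0 1 2 / Ffun 0 1 2, ?_, ?_⟩
  · intro q₁ q₂ q₃ hq12 hq13 hq23
    set α : ℂ := q₃ * (q₂ - q₁) + q₁ * (q₂ - q₃) with hα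
    set β : ℂ := -2 * q₁ * (q₂ - q₃) with hβ
    set γ : ℂ := 2 * q₂ - q₁ - q₃ with hγ
    set δ : ℂ := -2 * (q₂ - q₃) with hδ
    have e12 : q₂ - q₁ ≠ 0 := sub_ne_zero.mpr hq12.symm
    have e23 : q₂ - q₃ ≠ 0 := sub_ne_zero.mpr hq23
    have e13 : q₁ - q₃ ≠ 0 := sub_ne_zero.mpr hq13
    have hdet : α * δ - β * γ ≠ 0 := by
      have : α * δ - β * γ = 2 * (q₂ - q₃) * (q₂ - q₁) * (q₁ - q₃) := by
        rw [hα, hβ, hγ, hδ]; ring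
      rw [this]
      simp [e12, e23, e13]
    have hd1 : γ * 0 + δ ≠ 0 := by
      rw [hγ, hδ]; simpa using by simpa using mul_ne_zero (by norm_num : (-2:ℂ) ≠ 0) e23
    have hd2 : γ * 1 + δ ≠ 0 := by
      have : γ * 1 + δ = q₃ - q₁ := by rw [hγ, hδ]; ring
      rw [this]
      exact sub_ne_zero.mpr hq13.symm
    have hd3 : γ * 2 + δ ≠ 0 := by
      have : γ * 2 + δ = 2 * (q₂ - q₁) := by rw [hγ, hδ]; ring
      rw [this]
      exact mul_ne_zero (by norm_num) e12
    have hm1 : moebius α β γ δ 0 = q₁ := by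
      unfold moebius
      rw [div_eq_iff (by simpa using hd1)]
      rw [hα, hβ, hγ, hδ]; ring
    have hm2 : moebius α β γ δ 1 = q₂ := by
      unfold moebius
      rw [div_eq_iff (by simpa using hd2)]
      rw [hα, hβ, hγ, hδ]; ring
    have hm3 : moebius α β γ δ 2 = q₃ := by
      unfold moebius
      rw [div_eq_iff (by simpa using hd3)]
      rw [hα, hβ, hγ, hδ]; ring
    have hf := hcov α β γ δ hdet 0 1 2 h01 h02 h12' hd1 hd2 hd3
    have hFc := Ffun_cov α β γ δ hdet 0 1 2 h01 h02 h12' hd1 hd2 hd3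
    rw [hm1, hm2, hm3] at hf hFc
    rw [hf]
    rw [div_mul_eq_mul_div, eq_div_iff hF0.ne']
    rw [hFc]
    ring
  · intro hpos
    exact div_pos (hpos 0 1 2 h01 h02 h12') hF0

end PercLog
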